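/- arXiv:math/0410280 — 3 statements merged into one kernel-verified Lean document; each statement's English description precedes it below -/
import Mathlib

section
/- Let $p \in \{0, 1/(k+1), \dots, 1\}$ for some integer $k \ge 1$, and let $B_p$ be the Bernoulli distribution with parameter $p$. Then for any $\alpha \ge 0$, $\log E_{B_p}[\exp(-\alpha\chi)] \le -\alpha p + \frac{k\,\alpha^2}{2(k+1)} p$. -/
theorem lemP_aux (ε p u : ℝ) (h1 : ε ≤ 1/2) (h2 : ε ≤ p) (h3 : p ≤ 1)
    (h4 : 0 ≤ u) (h5 : u ≤ 1) :
    (1-p)*u ≤ (1-ε)*(u+u^2/2+u^3/3+u^4/4)*(1-p*u) := by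
  set Q : ℝ := u+u^2/2+u^3/3+u^4/4 with hQ
  have hQ0 : 0 ≤ Q := by positivity
  have hu3 : (0:ℝ) ≤ u^3 := by positivity
  have hA : 0 ≤ (1-ε)*Q*(1-1*u) :=
    mul_nonneg (mul_nonneg (by linarith) hQ0) (by linarith)
  have k2 : u ≤ Q*(1-u/2) := by
    nlinarith [mul_nonneg (mul_nonneg hu3 h4) (sub_nonneg.2 h5), mul_nonneg hu3 (by linarith : (0:ℝ) ≤ 2 - u)]
  have k1 : Q*(1-u/2) ≤ Q*(1-ε*u) := by
    apply mul_le_mul_of_nonneg_left _ hQ0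
    nlinarith [mul_nonneg (by linarith : (0:ℝ) ≤ 1/2 - ε) h4]
  have hB : (1-ε)*u ≤ (1-ε)*Q*(1-ε*u) := by
    calc (1-ε)*u ≤ (1-ε)*(Q*(1-ε*u)) :=
          mul_le_mul_of_nonneg_left (k2.trans k1) (by linarith)
      _ = (1-ε)*Q*(1-ε*u) := by ring
  nlinarith [mul_nonneg (sub_nonneg.2 h2) hA, mul_nonneg (sub_nonneg.2 h3) (sub_nonneg.2 hB)]

theorem claimA_aux (x : ℝ) (hx : 0 ≤ x) :
    (1 - Real.exp (-x)) + (1 - Real.exp (-x))^2/2 + (1 - Real.exp (-x))^3/3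
      + (1 - Real.exp (-x))^4/4 ≤ x := by
  set G : ℝ → ℝ := fun a => a - ((1 - Real.exp (-a)) + (1 - Real.exp (-a))^2/2
      + (1 - Real.exp (-a))^3/3 + (1 - Real.exp (-a))^4/4) with hGdef
  have hG : ∀ y : ℝ, HasDerivAt G ((1 - Real.exp (-y))^4) y := by
    intro y
    have e1 : HasDerivAt (fun a : ℝ => 1 - Real.exp (-a)) (Real.exp (-y)) y := by
      have := (Real.hasDerivAt_exp (-y)).comp y (hasDerivAt_neg y)
      have h2 := this.const_sub 1
      exact h2.congr_deriv (by ring)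
    have h2 := ((e1).add (((e1.pow 2).div_const 2))).add ((e1.pow 3).div_const 3)
    have h3 := (h2.add ((e1.pow 4).div_const 4))
    have h4 := (hasDerivAt_id y).sub h3
    exact h4.congr_deriv (by ring)
  have hmono : MonotoneOn G (Set.Ici 0) := by
    apply monotoneOn_of_deriv_nonneg (convex_Ici 0)
    · exact fun y _ => ((hG y).differentiableAt).continuousAt.continuousWithinAt
    · exact fun y _ => ((hG y).differentiableAt).differentiableWithinAt
    · intro y _
      rw [(hG y).deriv]
      positivity
  have h0 : G 0 = 0 := by simp [hGdef]
  have := hmono (Set.self_mem_Ici) (Set.mem_Ici.2 hx) hx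
  rw [h0] at this
  simp only [hGdef] at this
  linarith

/-- For `p = m/(k+1)` in the grid and any `α ≥ 0`,
`log E_{B_p}[exp(-α χ)] ≤ -α p + k α²/(2(k+1)) p`, where
`E_{B_p}[exp(-α χ)] = (1-p) + p e^{-α}`. -/
theorem stmt_3 (k : ℕ) (hk : 1 ≤ k) (m : ℕ) (hm : m ≤ k + 1)
    (p : ℝ) (hp : p = (m : ℝ) / (k + 1)) (α : ℝ) (hα : 0 ≤ α) :
    Real.log ((1 - p) + p * Real.exp (-α))
      ≤ -α * p + (k : ℝ) * α ^ 2 / (2 * (k + 1)) * p := by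
  have hk1 : (0:ℝ) < (k:ℝ) + 1 := by positivity
  rcases Nat.eq_zero_or_pos m with hm0 | hm1
  · subst hm0
    simp [hp]
  -- now p > 0
  have hp0 : 0 < p := by
    rw [hp]; positivity
  have hp1 : p ≤ 1 := by
    rw [hp, div_le_one hk1]
    exact_mod_cast hm
  set ε : ℝ := 1/((k:ℝ)+1) with hε
  have hεp : ε ≤ p := by
    rw [hp, hε, div_le_div_iff_of_pos_right hk1]
    exact_mod_cast hm1
  have hεhalf : ε ≤ 1/2 := by
    rw [hε]
    apply div_le_div_of_nonneg_left one_pos.le (by norm_num)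
    have : (1:ℝ) ≤ (k:ℝ) := by exact_mod_cast hk
    linarith
  have hε0 : 0 < ε := by rw [hε]; positivity
  -- the function h and its derivative
  set c : ℝ := (k:ℝ)/(2*((k:ℝ)+1)) with hc
  have h2c : 2*c = 1 - ε := by
    rw [hc, hε]; field_simp; ring
  set h : ℝ → ℝ := fun a => Real.log ((1 - p) + p * Real.exp (-a)) + a*p - c*a^2*p
    with hhdef
  have hD : ∀ y : ℝ, 0 < (1 - p) + p * Real.exp (-y) := by
    intro y
    have := Real.exp_pos (-y)
    nlinarith
  have hderiv : ∀ y : ℝ, HasDerivAt h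
      ((-(p * Real.exp (-y)))/((1 - p) + p * Real.exp (-y)) + p - c*(2*y)*p) y := by
    intro y
    have e0 : HasDerivAt (fun a : ℝ => (1 - p) + p * Real.exp (-a))
        (-(p * Real.exp (-y))) y := by
      have := (Real.hasDerivAt_exp (-y)).comp y (hasDerivAt_neg y)
      have h2 := (this.const_mul p).const_add (1-p)
      exact h2.congr_deriv (by ring)
    have e1 := e0.log (ne_of_gt (hD y))
    have e2 := (hasDerivAt_id y).mul_const p
    have e3 := (((hasDerivAt_pow 2 y).const_mul c).mul_const p)
    have e4 := (e1.add e2).sub e3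
    exact e4.congr_deriv (by ring)
  have hkey : ∀ y : ℝ, 0 ≤ y →
      (-(p * Real.exp (-y)))/((1 - p) + p * Real.exp (-y)) + p - c*(2*y)*p ≤ 0 := by
    intro y hy
    set u : ℝ := 1 - Real.exp (-y) with hu
    have hu0 : 0 ≤ u := by
      rw [hu]
      have : Real.exp (-y) ≤ 1 := Real.exp_le_one_iff.2 (by linarith)
      linarith
    have hu1 : u ≤ 1 := by
      have := Real.exp_pos (-y)
      rw [hu]; linarith
    have hDy := hD y
    have hDu : (1 - p) + p * Real.exp (-y) = 1 - p*u := by rw [hu]; ring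
    have hP := lemP_aux ε p u hεhalf hεp hp1 hu0 hu1
    have hQx : u+u^2/2+u^3/3+u^4/4 ≤ y := by
      rw [hu]; exact claimA_aux y hy
    have hstep : (1-ε)*(u+u^2/2+u^3/3+u^4/4)*(1-p*u) ≤ (1-ε)*y*(1-p*u) := by
      have h1e : 0 ≤ 1 - ε := by linarith
      have hDpos : 0 < 1 - p*u := by rw [← hDu]; exact hDy
      have := mul_le_mul_of_nonneg_right
        (mul_le_mul_of_nonneg_left hQx h1e) hDpos.le
      linarith [this]
    have hmain : (1-p)*u ≤ (1-ε)*y*(1-p*u) := le_trans hP hstep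
    -- convert to the derivative inequality
    rw [div_add' _ _ _ (ne_of_gt hDy), div_sub' (ne_of_gt hDy)]
    apply div_nonpos_of_nonpos_of_nonneg _ hDy.le
    have hexp : Real.exp (-y) = 1 - u := by rw [hu]; ring
    rw [hDu, hexp]
    have hmul := mul_le_mul_of_nonneg_left hmain hp0.le
    have heq : (1 - p * u) * (c * (2 * y) * p) = p * ((1-ε)*y*(1-p*u)) := by
      linear_combination ((1-p*u)*y*p) * h2c
    linarith [hmul, heq]
  -- h is antitone on [0, ∞)
  have hanti : AntitoneOn h (Set.Ici 0) := by
    apply antitoneOn_of_deriv_nonpos (convex_Ici 0)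
    · exact fun y _ => ((hderiv y).differentiableAt).continuousAt.continuousWithinAt
    · exact fun y _ => ((hderiv y).differentiableAt).differentiableWithinAt
    · intro y hy
      rw [(hderiv y).deriv]
      exact hkey y (le_of_lt (by simpa using hy))
  have h00 : h 0 = 0 := by simp [hhdef]
  have hfin := hanti (Set.self_mem_Ici) (Set.mem_Ici.2 hα) hα
  rw [h00] at hfin
  simp only [hhdef] at hfin
  have : -α * p + (k : ℝ) * α ^ 2 / (2 * ((k:ℝ) + 1)) * p = -(α*p) + c*α^2*p := by
    rw [hc]; ring
  rw [this]
  linarith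
end

section
/- The function $g : \mathbb{R} \to \mathbb{R}$ defined by $g(x) = x^{-2}(e^x - 1 - x)$ for $x \ne 0$ and $g(0) = 1/2$ is increasing on $\mathbb{R}$. -/
open Real intervalIntegral

lemma g_eq_integral (x : ℝ) :
    (if x = 0 then 1/2 else (Real.exp x - 1 - x) / x ^ 2)
      = ∫ t in (0:ℝ)..1, (1 - t) * Real.exp (t * x) := by
  by_cases hx : x = 0
  · subst hx
    simp only [if_pos rfl, mul_zero, Real.exp_zero, mul_one]
    have : (∫ t in (0:ℝ)..1, (1 - t)) = 1/2 := by
      rw [intervalIntegral.integral_sub intervalIntegrable_const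
        (intervalIntegral.intervalIntegrable_id)]
      simp
      norm_num
    rw [this]
    simp
  · rw [if_neg hx]
    have key : ∀ t ∈ Set.uIcc (0:ℝ) 1,
        HasDerivAt (fun t : ℝ => (1 - t) * Real.exp (t * x) / x + Real.exp (t * x) / x ^ 2)
          ((1 - t) * Real.exp (t * x)) t := by
      intro t _
      have h1 : HasDerivAt (fun t : ℝ => Real.exp (t * x)) (Real.exp (t * x) * x) t := by
        simpa using ((hasDerivAt_id t).mul_const x).exp
      have h2 : HasDerivAt (fun t : ℝ => (1 - t)) (-1) t := by
        simpa using ((hasDerivAt_id t).const_sub 1)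
      have h3 := (h2.mul h1).div_const x
      have h4 := h1.div_const (x ^ 2)
      refine (h3.add h4).congr_deriv ?_
      rw [div_add_div _ _ hx (pow_ne_zero 2 hx), div_eq_iff (mul_ne_zero hx (pow_ne_zero 2 hx))]
      ring
    have hcont : IntervalIntegrable (fun t : ℝ => (1 - t) * Real.exp (t * x))
        MeasureTheory.volume 0 1 :=
      (Continuous.intervalIntegrable (by continuity) 0 1)
    rw [intervalIntegral.integral_eq_sub_of_hasDerivAt key hcont]
    field_simp
    rw [mul_zero, Real.exp_zero]
    ring

/-- The function `g(x) = (e^x - 1 - x)/x²` (with `g(0) = 1/2`) is increasing. -/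
theorem stmt_8 :
    Monotone (fun x : ℝ =>
      if x = 0 then 1/2 else (Real.exp x - 1 - x) / x ^ 2) := by
  intro a b hab
  simp only [g_eq_integral]
  apply intervalIntegral.integral_mono_on (by norm_num)
    (Continuous.intervalIntegrable (by continuity) 0 1)
    (Continuous.intervalIntegrable (by continuity) 0 1)
  intro t ht
  rcases ht with ⟨ht0, ht1⟩
  have h1 : (0:ℝ) ≤ 1 - t := by linarith
  exact mul_le_mul_of_nonneg_left (Real.exp_le_exp.mpr (by nlinarith)) h1
end

section
/- Let $d' > 0$, $N > 0$, and $r_1, R \in [0, 1/2]$ satisfy $(R - r_1)^2 \le \frac{2 d' R (1 - R)}{N}$. Then $R \le \left(1 + \frac{2d'}{N}\right)^{-1} \left\{ r_1 + \frac{d'}{N} + \sqrt{ \frac{2 d' r_1 (1 - r_1)}{N} + \frac{d'^2}{N^2} } \right\}$. -/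
/-- Solving `(R - r₁)² ≤ 2d' R(1-R)/N` in `R` for `r₁, R ∈ [0, 1/2]`. -/
theorem stmt_14 (d' N r₁ R : ℝ) (hd : 0 < d') (hN : 0 < N)
    (hr₁0 : 0 ≤ r₁) (hr₁1 : r₁ ≤ 1/2) (hR0 : 0 ≤ R) (hR1 : R ≤ 1/2)
    (h : (R - r₁) ^ 2 ≤ 2 * d' * (R * (1 - R)) / N) :
    R ≤ (1 + 2 * d' / N)⁻¹ *
      (r₁ + d' / N + Real.sqrt (2 * d' * (r₁ * (1 - r₁)) / N + d' ^ 2 / N ^ 2)) := by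
  set D := 2 * d' * (r₁ * (1 - r₁)) / N + d' ^ 2 / N ^ 2 with hD
  have hD0 : 0 ≤ D := by
    have : 0 ≤ r₁ * (1 - r₁) := mul_nonneg hr₁0 (by linarith)
    positivity
  set s := Real.sqrt D with hs
  have hs0 : 0 ≤ s := Real.sqrt_nonneg _
  have hs2 : s ^ 2 = D := Real.sq_sqrt hD0
  have ha : 0 < 1 + 2 * d' / N := by positivity
  have key : ((1 + 2 * d' / N) * R - (r₁ + d' / N)) ^ 2 ≤ s ^ 2 := by
    rw [hs2, hD]
    have h' : (R - r₁) ^ 2 * N ≤ 2 * d' * (R * (1 - R)) := by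
      rw [le_div_iff₀ hN] at h; linarith
    rw [div_add_div _ _ (ne_of_gt hN) (by positivity : (N^2:ℝ) ≠ 0), le_div_iff₀ (by positivity)]
    field_simp
    nlinarith [mul_le_mul_of_nonneg_left h'
      (by positivity : (0:ℝ) ≤ (N + 2 * d'))]
  have key2 : (1 + 2 * d' / N) * R - (r₁ + d' / N) ≤ s := by
    nlinarith [sq_nonneg ((1 + 2 * d' / N) * R - (r₁ + d' / N) - s),
      sq_nonneg ((1 + 2 * d' / N) * R - (r₁ + d' / N) + s)]
  rw [le_inv_mul_iff₀ ha]; linarith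
end
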